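/- Let r ∈ ℝ with r ≠ 0. There is a 5-dimensional real Lie algebra 𝔤 with basis e₁,...,e₅ and dual basis e¹,...,e⁵ whose Chevalley–Eilenberg differentials satisfy (writing e^{ij} for eⁱ∧eʲ): de¹ = 0, de² = r e^{34} + (r²/2) e^{35}, de³ = r e^{13}, de⁴ = −(r²/2) e^{15} + r e^{23}, de⁵ = −2e^{14} − 2e^{23} (i.e., the bracket determined by these equations satisfies the Jacobi identity). Moreover, 𝔤 is solvable, the quadruplet η = e⁵, ω₁ = e^{12} + e^{34}, ω₂ = e^{13} − e^{24}, ω₃ = e^{14} + e^{23} is a hypo-contact structure on 𝔤, and 𝔤 is isomorphic to 𝔥₅. -/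

import Mathlib

noncomputable section

/-- Chevalley–Eilenberg differential of a 1-form on a Lie algebra. -/
def dOne {V : Type*} [LieRing V] [LieAlgebra ℝ V] (α : V → ℝ) (x y : V) : ℝ :=
  -α ⁅x, y⁆

/-- Chevalley–Eilenberg differential of a 2-form on a Lie algebra. -/
def dTwo {V : Type*} [LieRing V] [LieAlgebra ℝ V] (ω : V → V → ℝ) (x y z : V) : ℝ :=
  -ω ⁅x, y⁆ z + ω ⁅x, z⁆ y - ω ⁅y, z⁆ x

/-- Chevalley–Eilenberg differential of a 3-form on a Lie algebra. -/
def dThree {V : Type*} [LieRing V] [LieAlgebra ℝ V] (σ : V → V → V → ℝ)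
    (x y z w : V) : ℝ :=
  -σ ⁅x, y⁆ z w + σ ⁅x, z⁆ y w - σ ⁅x, w⁆ y z
    - σ ⁅y, z⁆ x w + σ ⁅y, w⁆ x z - σ ⁅z, w⁆ x y

/-- Wedge product of two 1-forms, as an alternating bilinear map. -/
def wedge1 {V : Type*} [LieRing V] [LieAlgebra ℝ V] (α β : V →ₗ[ℝ] ℝ) :
    V →ₗ[ℝ] V →ₗ[ℝ] ℝ :=
  LinearMap.mk₂ ℝ (fun x y => α x * β y - α y * β x)
    (fun m₁ m₂ n => by simp [map_add]; ring)
    (fun c m n => by simp [map_smul, smul_eq_mul]; ring)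
    (fun m n₁ n₂ => by simp [map_add]; ring)
    (fun c m n => by simp [map_smul, smul_eq_mul]; ring)

/-- Wedge product of a 1-form and a 2-form. -/
def wedge12 {V : Type*} (α : V → ℝ) (ω : V → V → ℝ) (x y z : V) : ℝ :=
  α x * ω y z - α y * ω x z + α z * ω x y

/-- Wedge product of two 2-forms. -/
def wedge22 {V : Type*} (ω τ : V → V → ℝ) (x y z w : V) : ℝ :=
  ω x y * τ z w - ω x z * τ y w + ω x w * τ y z
    + ω y z * τ x w - ω y w * τ x z + ω z w * τ x y

/-- Wedge product of a 4-form and a 1-form. -/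
def wedge41 {V : Type*} (v : V → V → V → V → ℝ) (α : V → ℝ)
    (x₀ x₁ x₂ x₃ x₄ : V) : ℝ :=
  α x₀ * v x₁ x₂ x₃ x₄ - α x₁ * v x₀ x₂ x₃ x₄ + α x₂ * v x₀ x₁ x₃ x₄
    - α x₃ * v x₀ x₁ x₂ x₄ + α x₄ * v x₀ x₁ x₂ x₃

/-- An SU(2)-structure on a 5-dimensional real Lie algebra. -/
structure IsSU2Structure {V : Type*} [LieRing V] [LieAlgebra ℝ V]
    (η : V →ₗ[ℝ] ℝ) (ω₁ ω₂ ω₃ : V →ₗ[ℝ] V →ₗ[ℝ] ℝ) : Prop where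
  alt1 : ∀ x, ω₁ x x = 0
  alt2 : ∀ x, ω₂ x x = 0
  alt3 : ∀ x, ω₃ x x = 0
  vol : ∃ v : V → V → V → V → ℝ,
    wedge22 (fun a b => ω₁ a b) (fun a b => ω₁ a b) = v ∧
    wedge22 (fun a b => ω₂ a b) (fun a b => ω₂ a b) = v ∧
    wedge22 (fun a b => ω₃ a b) (fun a b => ω₃ a b) = v ∧
    wedge22 (fun a b => ω₁ a b) (fun a b => ω₂ a b) = (fun _ _ _ _ => 0) ∧
    wedge22 (fun a b => ω₁ a b) (fun a b => ω₃ a b) = (fun _ _ _ _ => 0) ∧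
    wedge22 (fun a b => ω₂ a b) (fun a b => ω₃ a b) = (fun _ _ _ _ => 0) ∧
    wedge41 v (fun x => η x) ≠ (fun _ _ _ _ _ => 0)
  compat : ∀ X Y : V, (∀ z, ω₃ X z = ω₁ Y z) → 0 ≤ ω₂ X Y

/-- A hypo-contact structure on a 5-dimensional real Lie algebra. -/
structure IsHypoContact {V : Type*} [LieRing V] [LieAlgebra ℝ V]
    (η : V →ₗ[ℝ] ℝ) (ω₁ ω₂ ω₃ : V →ₗ[ℝ] V →ₗ[ℝ] ℝ)
    extends IsSU2Structure η ω₁ ω₂ ω₃ : Prop where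
  contact : ∀ x y, dOne (fun z => η z) x y = -2 * ω₃ x y
  closed1 : ∀ x y z w, dThree (wedge12 (fun z => η z) (fun a b => ω₁ a b)) x y z w = 0
  closed2 : ∀ x y z w, dThree (wedge12 (fun z => η z) (fun a b => ω₂ a b)) x y z w = 0

/-- The Lie algebra `𝔥₁`. -/
def IsH1 (V : Type*) [LieRing V] [LieAlgebra ℝ V] : Prop :=
  ∃ X : Module.Basis (Fin 5) ℝ V,
    ⁅X 0, X 1⁆ = 0 ∧ ⁅X 0, X 2⁆ = 0 ∧ ⁅X 0, X 3⁆ = X 4 ∧ ⁅X 0, X 4⁆ = 0 ∧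
    ⁅X 1, X 2⁆ = X 4 ∧ ⁅X 1, X 3⁆ = 0 ∧ ⁅X 1, X 4⁆ = 0 ∧
    ⁅X 2, X 3⁆ = 0 ∧ ⁅X 2, X 4⁆ = 0 ∧ ⁅X 3, X 4⁆ = 0

/-- The Lie algebra `𝔥₂`. -/
def IsH2 (V : Type*) [LieRing V] [LieAlgebra ℝ V] : Prop :=
  ∃ X : Module.Basis (Fin 5) ℝ V,
    ⁅X 0, X 1⁆ = 0 ∧ ⁅X 0, X 2⁆ = 0 ∧ ⁅X 0, X 3⁆ = 0 ∧ ⁅X 0, X 4⁆ = (2 : ℝ) • X 0 ∧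
    ⁅X 1, X 2⁆ = X 0 ∧ ⁅X 1, X 3⁆ = 0 ∧ ⁅X 1, X 4⁆ = X 1 ∧
    ⁅X 2, X 3⁆ = 0 ∧ ⁅X 2, X 4⁆ = X 2 ∧ ⁅X 3, X 4⁆ = (-3 : ℝ) • X 3

/-- The Lie algebra `𝔥₃`. -/
def IsH3 (V : Type*) [LieRing V] [LieAlgebra ℝ V] : Prop :=
  ∃ X : Module.Basis (Fin 5) ℝ V,
    ⁅X 0, X 1⁆ = 0 ∧ ⁅X 0, X 2⁆ = 0 ∧ ⁅X 0, X 3⁆ = (2 : ℝ) • X 0 ∧ ⁅X 0, X 4⁆ = 0 ∧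
    ⁅X 1, X 2⁆ = X 0 ∧ ⁅X 1, X 3⁆ = X 1 ∧ ⁅X 1, X 4⁆ = -X 2 ∧
    ⁅X 2, X 3⁆ = X 2 ∧ ⁅X 2, X 4⁆ = X 1 ∧ ⁅X 3, X 4⁆ = 0

/-- The Lie algebra `𝔥₄`. -/
def IsH4 (V : Type*) [LieRing V] [LieAlgebra ℝ V] : Prop :=
  ∃ X : Module.Basis (Fin 5) ℝ V,
    ⁅X 0, X 1⁆ = 0 ∧ ⁅X 0, X 2⁆ = 0 ∧ ⁅X 0, X 3⁆ = X 0 ∧ ⁅X 0, X 4⁆ = 0 ∧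
    ⁅X 1, X 2⁆ = 0 ∧ ⁅X 1, X 3⁆ = 0 ∧ ⁅X 1, X 4⁆ = X 1 ∧
    ⁅X 2, X 3⁆ = -X 2 ∧ ⁅X 2, X 4⁆ = -X 2 ∧ ⁅X 3, X 4⁆ = 0

/-- The Lie algebra `𝔥₅`. -/
def IsH5 (V : Type*) [LieRing V] [LieAlgebra ℝ V] : Prop :=
  ∃ X : Module.Basis (Fin 5) ℝ V,
    ⁅X 0, X 1⁆ = 0 ∧ ⁅X 0, X 2⁆ = 0 ∧ ⁅X 0, X 3⁆ = 0 ∧ ⁅X 0, X 4⁆ = X 0 ∧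
    ⁅X 1, X 2⁆ = 0 ∧ ⁅X 1, X 3⁆ = X 0 ∧ ⁅X 1, X 4⁆ = 0 ∧
    ⁅X 2, X 3⁆ = X 1 ∧ ⁅X 2, X 4⁆ = -X 2 ∧ ⁅X 3, X 4⁆ = X 3

/-- `e^{ij}`, the wedge of the `i`-th and `j`-th dual basis 1-forms. -/
def bw {V : Type*} [LieRing V] [LieAlgebra ℝ V] (e : Module.Basis (Fin 5) ℝ V) (i j : Fin 5) :
    V →ₗ[ℝ] V →ₗ[ℝ] ℝ :=
  wedge1 (e.coord i) (e.coord j)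

/-- The content of Statement 7: structure equations, solvability, hypo-contact structure
and the isomorphism type, for a Lie algebra `V`. -/
def GoodLieAlgebra7 (r : ℝ) (V : Type) [LieRing V] [LieAlgebra ℝ V] : Prop :=
  LieAlgebra.IsSolvable V ∧
  ∃ e : Module.Basis (Fin 5) ℝ V,
      (∀ x y : _, dOne (⇑(e.coord 0)) x y = 0) ∧
      (∀ x y : _, dOne (⇑(e.coord 1)) x y = (r) * bw e 2 3 x y + (r^2/2) * bw e 2 4 x y) ∧
      (∀ x y : _, dOne (⇑(e.coord 2)) x y = (r) * bw e 0 2 x y) ∧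
      (∀ x y : _, dOne (⇑(e.coord 3)) x y = (-(r^2/2)) * bw e 0 4 x y + (r) * bw e 1 2 x y) ∧
      (∀ x y : _, dOne (⇑(e.coord 4)) x y = (-2) * bw e 0 3 x y + (-2) * bw e 1 2 x y) ∧
      IsHypoContact (e.coord 4) (bw e 0 1 + bw e 2 3) (bw e 0 2 - bw e 1 3) (bw e 0 3 + bw e 1 2) ∧
      IsH5 V

/-! ### Auxiliary construction -/

def GV (_r : ℝ) : Type := Fin 5 → ℝ

namespace GV

variable {r : ℝ}

instance : AddCommGroup (GV r) := inferInstanceAs (AddCommGroup (Fin 5 → ℝ))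
instance : Module ℝ (GV r) := inferInstanceAs (Module ℝ (Fin 5 → ℝ))

/-- coordinates -/
def c (x : GV r) : Fin 5 → ℝ := x

/-- constructor -/
def mk' (f : Fin 5 → ℝ) : GV r := f

theorem ext' {x y : GV r} (h : ∀ i, x.c i = y.c i) : x = y := funext h

@[simp] theorem c_add (x y : GV r) (i : Fin 5) : (x + y).c i = x.c i + y.c i := rfl
@[simp] theorem c_smul (t : ℝ) (x : GV r) (i : Fin 5) : (t • x).c i = t * x.c i := rfl
@[simp] theorem c_neg (x : GV r) (i : Fin 5) : (-x).c i = -(x.c i) := rfl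
@[simp] theorem c_zero (i : Fin 5) : (0 : GV r).c i = 0 := rfl
@[simp] theorem c_mk' (f : Fin 5 → ℝ) (i : Fin 5) : (mk' (r := r) f).c i = f i := rfl

/-- the bracket -/
def b (x y : GV r) : GV r := mk' ![0,
  -r*(x.c 2*y.c 3 - x.c 3*y.c 2) - r^2/2*(x.c 2*y.c 4 - x.c 4*y.c 2),
  -r*(x.c 0*y.c 2 - x.c 2*y.c 0),
  r^2/2*(x.c 0*y.c 4 - x.c 4*y.c 0) - r*(x.c 1*y.c 2 - x.c 2*y.c 1),
  2*(x.c 0*y.c 3 - x.c 3*y.c 0) + 2*(x.c 1*y.c 2 - x.c 2*y.c 1)]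

@[simp] theorem b_c0 (x y : GV r) : (b x y).c 0 = 0 := rfl
@[simp] theorem b_c1 (x y : GV r) : (b x y).c 1 =
  -r*(x.c 2*y.c 3 - x.c 3*y.c 2) - r^2/2*(x.c 2*y.c 4 - x.c 4*y.c 2) := rfl
@[simp] theorem b_c2 (x y : GV r) : (b x y).c 2 = -r*(x.c 0*y.c 2 - x.c 2*y.c 0) := rfl
@[simp] theorem b_c3 (x y : GV r) : (b x y).c 3 =
  r^2/2*(x.c 0*y.c 4 - x.c 4*y.c 0) - r*(x.c 1*y.c 2 - x.c 2*y.c 1) := rfl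
@[simp] theorem b_c4 (x y : GV r) : (b x y).c 4 =
  2*(x.c 0*y.c 3 - x.c 3*y.c 0) + 2*(x.c 1*y.c 2 - x.c 2*y.c 1) := rfl

instance : LieRing (GV r) :=
  { (inferInstance : AddCommGroup (GV r)) with
    bracket := b
    add_lie := fun x y z => ext' fun i => by fin_cases i <;> simp <;> ring
    lie_add := fun x y z => ext' fun i => by fin_cases i <;> simp <;> ring
    lie_self := fun x => ext' fun i => by
      fin_cases i <;> simp [b, mul_comm]
    leibniz_lie := fun x y z => ext' fun i => by fin_cases i <;> simp <;> ring }

@[simp] theorem lie_c0 (x y : GV r) : (⁅x, y⁆).c 0 = 0 := rfl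
@[simp] theorem lie_c1 (x y : GV r) : (⁅x, y⁆).c 1 =
  -r*(x.c 2*y.c 3 - x.c 3*y.c 2) - r^2/2*(x.c 2*y.c 4 - x.c 4*y.c 2) := rfl
@[simp] theorem lie_c2 (x y : GV r) : (⁅x, y⁆).c 2 = -r*(x.c 0*y.c 2 - x.c 2*y.c 0) := rfl
@[simp] theorem lie_c3 (x y : GV r) : (⁅x, y⁆).c 3 =
  r^2/2*(x.c 0*y.c 4 - x.c 4*y.c 0) - r*(x.c 1*y.c 2 - x.c 2*y.c 1) := rfl
@[simp] theorem lie_c4 (x y : GV r) : (⁅x, y⁆).c 4 =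
  2*(x.c 0*y.c 3 - x.c 3*y.c 0) + 2*(x.c 1*y.c 2 - x.c 2*y.c 1) := rfl

instance : LieAlgebra ℝ (GV r) :=
  { (inferInstance : Module ℝ (GV r)) with
    lie_smul := fun t x y => ext' fun i => by fin_cases i <;> simp <;> ring }

/-- the standard basis -/
def E : Module.Basis (Fin 5) ℝ (GV r) :=
  (Pi.basisFun ℝ (Fin 5)).map
    (LinearEquiv.refl ℝ (Fin 5 → ℝ) : (Fin 5 → ℝ) ≃ₗ[ℝ] GV r)

@[simp] theorem coord_apply (i : Fin 5) (x : GV r) : (E (r := r)).coord i x = x.c i := by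
  simp only [E, Module.Basis.map_repr, LinearEquiv.trans_apply, Module.Basis.coord_apply]
  rfl

@[simp] theorem c_E (i j : Fin 5) : (E (r := r) i).c j = if i = j then 1 else 0 := by
  rw [← coord_apply, Module.Basis.coord_apply, Module.Basis.repr_self, Finsupp.single_apply]

end GV


namespace GV

/-- first ideal: coordinate 0 vanishes -/
def I1 (r : ℝ) : LieIdeal ℝ (GV r) where
  carrier := {x | x.c 0 = 0}
  add_mem' := by intro a b ha hb; simp_all [Set.mem_setOf_eq]
  zero_mem' := by simp [Set.mem_setOf_eq]
  smul_mem' := by intro t x hx; simp_all [Set.mem_setOf_eq]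
  lie_mem := by intro x m _; simp [Set.mem_setOf_eq]

/-- second ideal: coordinates 0 and 2 vanish -/
def I2 (r : ℝ) : LieIdeal ℝ (GV r) where
  carrier := {x | x.c 0 = 0 ∧ x.c 2 = 0}
  add_mem' := by
    intro a b ha hb
    simp_all [Set.mem_setOf_eq]
  zero_mem' := by simp [Set.mem_setOf_eq]
  smul_mem' := by intro t x hx; simp_all [Set.mem_setOf_eq]
  lie_mem := by
    rintro x m ⟨h0, h2⟩
    exact ⟨by simp, by simp [h0, h2]⟩

theorem mem_I1 {r : ℝ} {x : GV r} : x ∈ I1 r ↔ x.c 0 = 0 := Iff.rfl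

theorem mem_I2 {r : ℝ} {x : GV r} : x ∈ I2 r ↔ x.c 0 = 0 ∧ x.c 2 = 0 := Iff.rfl

theorem solvable (r : ℝ) : LieAlgebra.IsSolvable (GV r) := by
  have h1 : LieAlgebra.derivedSeries ℝ (GV r) 1 ≤ I1 r := by
    show LieAlgebra.derivedSeries ℝ (GV r) (0 + 1) ≤ I1 r
    rw [LieAlgebra.derivedSeries_def, LieAlgebra.derivedSeriesOfIdeal_succ,
      LieSubmodule.lie_le_iff]
    intro x _ m _
    rw [mem_I1]; simp
  have h2 : LieAlgebra.derivedSeries ℝ (GV r) 2 ≤ I2 r := by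
    show LieAlgebra.derivedSeries ℝ (GV r) (1 + 1) ≤ I2 r
    rw [LieAlgebra.derivedSeries_def, LieAlgebra.derivedSeriesOfIdeal_succ,
      LieSubmodule.lie_le_iff]
    intro x hx m hm
    rw [← LieAlgebra.derivedSeries_def] at hx hm
    have hx0 := (mem_I1).mp (h1 hx)
    have hm0 := (mem_I1).mp (h1 hm)
    rw [mem_I2]
    exact ⟨by simp, by simp [hx0, hm0]⟩
  have h3 : LieAlgebra.derivedSeries ℝ (GV r) 3 = ⊥ := by
    rw [eq_bot_iff]
    show LieAlgebra.derivedSeries ℝ (GV r) (2 + 1) ≤ ⊥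
    rw [LieAlgebra.derivedSeries_def, LieAlgebra.derivedSeriesOfIdeal_succ,
      LieSubmodule.lie_le_iff]
    intro x hx m hm
    rw [← LieAlgebra.derivedSeries_def] at hx hm
    obtain ⟨hx0, hx2⟩ := (mem_I2).mp (h2 hx)
    obtain ⟨hm0, hm2⟩ := (mem_I2).mp (h2 hm)
    rw [LieSubmodule.mem_bot]
    apply ext'
    intro i
    fin_cases i <;> simp [hx0, hx2, hm0, hm2]
  exact LieAlgebra.IsSolvable.mk h3

variable {r : ℝ}

@[simp] theorem repr_apply (x : GV r) (i : Fin 5) : (E (r := r)).repr x i = x.c i := by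
  rw [← coord_apply, Module.Basis.coord_apply]

@[simp] theorem bw_apply (i j : Fin 5) (x y : GV r) :
    bw (E (r := r)) i j x y = x.c i * y.c j - x.c j * y.c i := by
  simp [bw, wedge1]; ring

/-- forward change of basis -/
def fm (r : ℝ) : GV r →ₗ[ℝ] GV r where
  toFun x := mk' ![x.c 4/r, 2*r*x.c 1, x.c 3, -2*r^2*x.c 0 + x.c 2, 4*r*x.c 0 + 2/r*x.c 2]
  map_add' x y := ext' fun i => by fin_cases i <;> simp <;> ring
  map_smul' t x := ext' fun i => by fin_cases i <;> simp <;> ring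

/-- backward change of basis -/
def gm (r : ℝ) : GV r →ₗ[ℝ] GV r where
  toFun y := mk' ![y.c 4/(8*r) - y.c 3/(4*r^2), y.c 1/(2*r), y.c 3/2 + r*y.c 4/4, y.c 2, r*y.c 0]
  map_add' x y := ext' fun i => by fin_cases i <;> simp <;> ring
  map_smul' t x := ext' fun i => by fin_cases i <;> simp <;> ring

theorem isH5 (r : ℝ) (hr : r ≠ 0) : IsH5 (GV r) := by
  have hfg : (fm r) ∘ₗ (gm r) = LinearMap.id := by
    apply LinearMap.ext; intro x; apply ext'; intro i
    fin_cases i <;> simp [fm, gm] <;> field_simp <;> ring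
  have hgf : (gm r) ∘ₗ (fm r) = LinearMap.id := by
    apply LinearMap.ext; intro x; apply ext'; intro i
    fin_cases i <;> simp [fm, gm] <;> field_simp <;> ring
  set q : GV r ≃ₗ[ℝ] GV r := LinearEquiv.ofLinear (fm r) (gm r) hfg hgf with hq
  set X : Module.Basis (Fin 5) ℝ (GV r) := (E (r := r)).map q with hX
  have hXa : ∀ i, X i = fm r (E (r := r) i) := by
    intro i; rw [hX, Module.Basis.map_apply, hq]; rfl
  have h0 : X 0 = mk' ![0, 0, 0, -2*r^2, 4*r] := by
    rw [hXa]; apply ext'; intro i; fin_cases i <;> simp [fm] <;> ring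
  have h1 : X 1 = mk' ![0, 2*r, 0, 0, 0] := by
    rw [hXa]; apply ext'; intro i; fin_cases i <;> simp [fm] <;> ring
  have h2 : X 2 = mk' ![0, 0, 0, 1, 2/r] := by
    rw [hXa]; apply ext'; intro i; fin_cases i <;> simp [fm] <;> ring
  have h3 : X 3 = mk' ![0, 0, 1, 0, 0] := by
    rw [hXa]; apply ext'; intro i; fin_cases i <;> simp [fm] <;> ring
  have h4 : X 4 = mk' ![1/r, 0, 0, 0, 0] := by
    rw [hXa]; apply ext'; intro i; fin_cases i <;> simp [fm] <;> ring
  refine ⟨X, ?_, ?_, ?_, ?_, ?_, ?_, ?_, ?_, ?_, ?_⟩ <;>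
    simp only [h0, h1, h2, h3, h4] <;>
    · apply ext'; intro i
      fin_cases i <;> (try simp) <;> (try field_simp) <;> (try ring)

theorem eq0 (x y : GV r) : dOne (⇑((E (r := r)).coord 0)) x y = 0 := by
  simp [dOne]

theorem eq1 (x y : GV r) : dOne (⇑((E (r := r)).coord 1)) x y =
    r * bw E 2 3 x y + (r^2/2) * bw E 2 4 x y := by
  simp [dOne]; try ring

theorem eq2 (x y : GV r) : dOne (⇑((E (r := r)).coord 2)) x y = r * bw E 0 2 x y := by
  simp [dOne]; try ring

theorem eq3 (x y : GV r) : dOne (⇑((E (r := r)).coord 3)) x y =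
    (-(r^2/2)) * bw E 0 4 x y + r * bw E 1 2 x y := by
  simp [dOne]; try ring

theorem eq4 (x y : GV r) : dOne (⇑((E (r := r)).coord 4)) x y =
    (-2) * bw E 0 3 x y + (-2) * bw E 1 2 x y := by
  simp [dOne]; try ring

theorem hypo (r : ℝ) : IsHypoContact ((E (r := r)).coord 4)
    (bw E 0 1 + bw E 2 3) (bw E 0 2 - bw E 1 3) (bw E 0 3 + bw E 1 2) := by
  refine ⟨⟨?_, ?_, ?_, ?_, ?_⟩, ?_, ?_, ?_⟩
  · intro x; simp; ring
  · intro x; simp; ring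
  · intro x; simp; ring
  · -- volume forms
    refine ⟨wedge22
        (fun a b => (bw (E (r := r)) 0 1 + bw E 2 3 : GV r →ₗ[ℝ] GV r →ₗ[ℝ] ℝ) a b)
        (fun a b => (bw (E (r := r)) 0 1 + bw E 2 3 : GV r →ₗ[ℝ] GV r →ₗ[ℝ] ℝ) a b),
        rfl, ?_, ?_, ?_, ?_, ?_, ?_⟩
    · funext x y z w; simp [wedge22]; ring
    · funext x y z w; simp [wedge22]; ring
    · funext x y z w; simp [wedge22]; ring
    · funext x y z w; simp [wedge22]; ring
    · funext x y z w; simp [wedge22]; ring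
    · intro hcon
      have h2 := congrFun (congrFun (congrFun (congrFun (congrFun hcon
        (E (r := r) 0)) (E 1)) (E 2)) (E 3)) (E 4)
      simp [wedge41, wedge22] at h2
  · -- compat
    intro X Y h
    have q0 : Y.c 0 = -X.c 2 := by have := h (E 1); simp at this; linarith
    have q1 : Y.c 1 = X.c 3 := by have := h (E 0); simp at this; linarith
    have q2 : Y.c 2 = X.c 0 := by have := h (E 3); simp at this; linarith
    have q3 : Y.c 3 = -X.c 1 := by have := h (E 2); simp at this; linarith
    have key : (bw (E (r := r)) 0 2 - bw E 1 3 : GV r →ₗ[ℝ] GV r →ₗ[ℝ] ℝ) X Y =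
        X.c 0^2 + X.c 1^2 + X.c 2^2 + X.c 3^2 := by
      simp
      linear_combination (X.c 0)*q2 - (X.c 2)*q0 - (X.c 1)*q3 + (X.c 3)*q1
    rw [key]; positivity
  · intro x y; simp [dOne]; try ring
  · intro x y z w; simp [dThree, wedge12]; ring
  · intro x y z w; simp [dThree, wedge12]; ring

end GV

theorem exists_good_lie_algebra7 (r : ℝ) (hr : r ≠ 0) :
    ∃ (V : Type) (i₁ : LieRing V) (i₂ : @LieAlgebra ℝ V _ i₁),
      @GoodLieAlgebra7 r V i₁ i₂ := by
  exact ⟨GV r, inferInstance, inferInstance, GV.solvable r, GV.E,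
    fun x y => GV.eq0 x y, fun x y => GV.eq1 x y, fun x y => GV.eq2 x y,
    fun x y => GV.eq3 x y, fun x y => GV.eq4 x y, GV.hypo r, GV.isH5 r hr⟩

end
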